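/- For the PU on–off sampling model with N ≥ 2 samples, duty cycle u ∈ (0,1), departure rate λ_f > 0 and inter-sample times T_1,…,T_{N−1} > 0, the mean squared error of the averaging estimator ũ_a(z) = (1/N)·∑_{n=1}^{N} z_n satisfies V_{ũ_a,N} := ∑_{z ∈ {0,1}^N} (ũ_a(z))² P(z) − u² = u(1−u)/N + (2u(1−u)/N²)·∑_{i=1}^{N−1} ∑_{j=1}^{N−i} ∏_{k=j}^{i+j−1} e^{−T_k λ_f / u}. -/

import Mathlib

open Finset

/-- Transition probabilities of the PU on-off process:
`transProb u lf t x y = Pr_{xy}(t)` where `false` = idle, `true` = active. -/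
noncomputable def transProb (u lf t : ℝ) : Bool → Bool → ℝ
  | false, false => 1 - u + u * Real.exp (-(lf * t) / u)
  | false, true  => 1 - (1 - u + u * Real.exp (-(lf * t) / u))
  | true,  true  => u + (1 - u) * Real.exp (-(lf * t) / u)
  | true,  false => 1 - (u + (1 - u) * Real.exp (-(lf * t) / u))

/-- Probability of a binary sample sequence `z` of length `n + 1`
(samples `z 0, …, z n`, i.e. the paper's `z_1, …, z_N` with `N = n + 1`),
with inter-sample times `T 1, …, T n` (`T k` separates samples `k` and `k+1`):
`P(z) = u^{z_1} (1-u)^{1-z_1} ∏_{k=1}^{N-1} Pr_{z_k z_{k+1}}(T_k)`. -/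
noncomputable def seqProb (u lf : ℝ) {n : ℕ} (T : ℕ → ℝ) (z : Fin (n + 1) → Bool) : ℝ :=
  (if z 0 then u else 1 - u) *
    ∏ k : Fin n, transProb u lf (T (k.val + 1)) (z k.castSucc) (z k.succ)

lemma trans_sum (u lf t : ℝ) (x : Bool) :
    transProb u lf t x false + transProb u lf t x true = 1 := by
  cases x <;> simp [transProb]

lemma trans_true (u lf t : ℝ) (x : Bool) :
    transProb u lf t x true = u + ((if x then (1:ℝ) else 0) - u) * Real.exp (-(lf*t)/u) := by
  cases x <;> simp [transProb] <;> ring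

lemma seqProb_snoc (u lf : ℝ) (n : ℕ) (T : ℕ → ℝ) (y : Fin (n+1) → Bool) (b : Bool) :
    seqProb u lf T (Fin.snoc y b) =
      seqProb u lf T y * transProb u lf (T (n+1)) (y (Fin.last n)) b := by
  unfold seqProb
  rw [Fin.prod_univ_castSucc]
  have h0 : (Fin.snoc y b : Fin (n+2) → Bool) 0 = y 0 := by
    have : (0 : Fin (n+2)) = Fin.castSucc 0 := rfl
    rw [this, Fin.snoc_castSucc]
  rw [h0]
  have hterm : ∀ k : Fin n,
      transProb u lf (T ((Fin.castSucc k).val + 1))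
        ((Fin.snoc y b : Fin (n+2) → Bool) (Fin.castSucc (Fin.castSucc k)))
        ((Fin.snoc y b : Fin (n+2) → Bool) (Fin.succ (Fin.castSucc k)))
      = transProb u lf (T (k.val + 1)) (y (Fin.castSucc k)) (y (Fin.succ k)) := by
    intro k
    rw [Fin.snoc_castSucc, Fin.succ_castSucc, Fin.snoc_castSucc]
    rfl
  rw [Finset.prod_congr rfl (fun k _ => hterm k)]
  rw [Fin.snoc_castSucc, Fin.succ_last, Fin.snoc_last, Fin.val_last]
  ring

lemma sum_snoc_decomp {M : Type*} [AddCommMonoid M] (n : ℕ)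
    (F : (Fin (n+2) → Bool) → M) :
    ∑ z : Fin (n+2) → Bool, F z
      = ∑ y : Fin (n+1) → Bool, ∑ b : Bool, F (Fin.snoc y b) := by
  rw [← (Fintype.sum_equiv (Fin.snocEquiv (fun _ => Bool)) _ (fun z => F z) (fun p => rfl))]
  rw [Fintype.sum_prod_type]
  exact Finset.sum_comm

lemma sum_fin1 {M : Type*} [AddCommMonoid M] (F : (Fin 1 → Bool) → M) :
    ∑ z : Fin 1 → Bool, F z = F (fun _ => false) + F (fun _ => true) := by
  rw [← (Fintype.sum_equiv (Equiv.funUnique (Fin 1) Bool).symm _ (fun z => F z)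
      (fun b => rfl))]
  rw [Fintype.sum_bool, add_comm]
  have h : ∀ b : Bool, ((Equiv.funUnique (Fin 1) Bool).symm b) = (fun _ => b) := by
    intro b; funext i; simp [Equiv.funUnique]
  rw [h, h]

lemma seqProb_total (u lf : ℝ) : ∀ (n : ℕ) (T : ℕ → ℝ),
    ∑ z : Fin (n+1) → Bool, seqProb u lf T z = 1 := by
  intro n
  induction n with
  | zero =>
    intro T
    rw [sum_fin1]
    simp [seqProb]
  | succ n ih =>
    intro T
    rw [sum_snoc_decomp]
    have : ∀ y : Fin (n+1) → Bool,
        ∑ b : Bool, seqProb u lf T (Fin.snoc y b) = seqProb u lf T y := by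
      intro y
      simp only [seqProb_snoc, Fintype.sum_bool]
      rw [← mul_add, add_comm, trans_sum, mul_one]
    rw [Finset.sum_congr rfl (fun y _ => this y), ih]

lemma marg_one (u lf : ℝ) : ∀ (n : ℕ) (T : ℕ → ℝ) (a : Fin (n+1)),
    ∑ z : Fin (n+1) → Bool, (if z a then (1:ℝ) else 0) * seqProb u lf T z = u := by
  intro n
  induction n with
  | zero =>
    intro T a
    rw [sum_fin1]
    simp [seqProb]
  | succ n ih =>
    intro T a
    rw [sum_snoc_decomp]
    induction a using Fin.lastCases with
    | last =>
      have : ∀ y : Fin (n+1) → Bool,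
          ∑ b : Bool, (if (Fin.snoc y b : Fin (n+2) → Bool) (Fin.last (n+1)) then (1:ℝ) else 0)
              * seqProb u lf T (Fin.snoc y b)
          = u * seqProb u lf T y
            + Real.exp (-(lf * T (n+1))/u) *
              (((if y (Fin.last n) then (1:ℝ) else 0) - u) * seqProb u lf T y) := by
        intro y
        simp only [seqProb_snoc, Fin.snoc_last, Fintype.sum_bool, Bool.false_eq_true,
          if_true, if_false, one_mul, zero_mul, add_zero]
        rw [trans_true]
        ring
      rw [Finset.sum_congr rfl (fun y _ => this y)]
      rw [Finset.sum_add_distrib, ← Finset.mul_sum, ← Finset.mul_sum, seqProb_total]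
      have : ∑ y : Fin (n+1) → Bool,
          ((if y (Fin.last n) then (1:ℝ) else 0) - u) * seqProb u lf T y = 0 := by
        have := ih T (Fin.last n)
        have ht := seqProb_total u lf n T
        calc ∑ y : Fin (n+1) → Bool, ((if y (Fin.last n) then (1:ℝ) else 0) - u) * seqProb u lf T y
            = (∑ y : Fin (n+1) → Bool, (if y (Fin.last n) then (1:ℝ) else 0) * seqProb u lf T y)
              - u * ∑ y : Fin (n+1) → Bool, seqProb u lf T y := by
              rw [Finset.mul_sum, ← Finset.sum_sub_distrib]
              exact Finset.sum_congr rfl (fun y _ => by ring)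
          _ = 0 := by rw [this, ht]; ring
      rw [this, mul_zero, mul_one, add_zero]
    | cast a' =>
      have : ∀ y : Fin (n+1) → Bool,
          ∑ b : Bool, (if (Fin.snoc y b : Fin (n+2) → Bool) (Fin.castSucc a') then (1:ℝ) else 0)
              * seqProb u lf T (Fin.snoc y b)
          = (if y a' then (1:ℝ) else 0) * seqProb u lf T y := by
        intro y
        simp only [seqProb_snoc, Fin.snoc_castSucc, Fintype.sum_bool]
        rw [show ∀ r s t : ℝ, (if y a' then (1:ℝ) else 0) * (r * s) + (if y a' then (1:ℝ) else 0) * (r * t) = (if y a' then (1:ℝ) else 0) * r * (s + t) from fun r s t => by ring]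
        rw [add_comm (transProb u lf (T (n+1)) (y (Fin.last n)) true), trans_sum, mul_one]
      rw [Finset.sum_congr rfl (fun y _ => this y)]
      exact ih T a'

lemma chi_sq (c : Bool) : (if c then (1:ℝ) else 0) * (if c then (1:ℝ) else 0)
    = (if c then (1:ℝ) else 0) := by cases c <;> simp

lemma marg_two (u lf : ℝ) : ∀ (n : ℕ) (T : ℕ → ℝ) (a b : Fin (n+1)), a < b →
    ∑ z : Fin (n+1) → Bool,
        (if z a then (1:ℝ) else 0) * (if z b then 1 else 0) * seqProb u lf T z
      = u^2 + u*(1-u) * ∏ k ∈ Finset.Icc (a.val+1) b.val, Real.exp (-(lf * T k)/u) := by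
  intro n
  induction n with
  | zero =>
    intro T a b hab
    exact absurd (Fin.lt_iff_val_lt_val.mp hab) (by omega)
  | succ n ih =>
    intro T a b hab
    rw [sum_snoc_decomp]
    induction b using Fin.lastCases with
    | cast b' =>
      have ha : a.val < n+1 := by
        have h1 := Fin.lt_iff_val_lt_val.mp hab
        have h2 : (Fin.castSucc b').val ≤ n := by
          simp only [Fin.coe_castSucc]; omega
        omega
      have haa : a = Fin.castSucc (⟨a.val, ha⟩ : Fin (n+1)) := by
        apply Fin.ext; rfl
      set a' : Fin (n+1) := ⟨a.val, ha⟩ with ha'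
      have key : ∀ y : Fin (n+1) → Bool,
          ∑ c : Bool,
            (if (Fin.snoc y c : Fin (n+2) → Bool) a then (1:ℝ) else 0)
            * (if (Fin.snoc y c : Fin (n+2) → Bool) (Fin.castSucc b') then 1 else 0)
            * seqProb u lf T (Fin.snoc y c)
          = (if y a' then (1:ℝ) else 0) * (if y b' then 1 else 0) * seqProb u lf T y := by
        intro y
        simp only [haa, Fin.snoc_castSucc, seqProb_snoc, Fintype.sum_bool]
        rw [show ∀ r s t : ℝ,
            r * (seqProb u lf T y * s) + r * (seqProb u lf T y * t)
              = r * seqProb u lf T y * (s + t) from fun r s t => by ring]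
        rw [add_comm (transProb u lf (T (n+1)) (y (Fin.last n)) true), trans_sum, mul_one]
      rw [Finset.sum_congr rfl (fun y _ => key y)]
      have hab' : a' < b' := by
        rw [Fin.lt_iff_val_lt_val]
        have := Fin.lt_iff_val_lt_val.mp hab
        exact this
      rw [ih T a' b' hab']
      rfl
    | last =>
      have ha : a.val < n+1 := Fin.lt_iff_val_lt_val.mp hab
      have haa : a = Fin.castSucc (⟨a.val, ha⟩ : Fin (n+1)) := by
        apply Fin.ext; rfl
      set a' : Fin (n+1) := ⟨a.val, ha⟩ with ha'
      set E : ℝ := Real.exp (-(lf * T (n+1))/u) with hE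
      have key : ∀ y : Fin (n+1) → Bool,
          ∑ c : Bool,
            (if (Fin.snoc y c : Fin (n+2) → Bool) a then (1:ℝ) else 0)
            * (if (Fin.snoc y c : Fin (n+2) → Bool) (Fin.last (n+1)) then 1 else 0)
            * seqProb u lf T (Fin.snoc y c)
          = u * ((if y a' then (1:ℝ) else 0) * seqProb u lf T y)
            + E * ((if y a' then (1:ℝ) else 0) * (if y (Fin.last n) then 1 else 0)
                    * seqProb u lf T y
                  - u * ((if y a' then (1:ℝ) else 0) * seqProb u lf T y)) := by
        intro y
        simp only [haa, Fin.snoc_castSucc, Fin.snoc_last, seqProb_snoc, Fintype.sum_bool,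
          Bool.false_eq_true, if_false, if_true, mul_zero, zero_mul, mul_one, add_zero]
        rw [trans_true, hE]
        ring
      rw [Finset.sum_congr rfl (fun y _ => key y)]
      rw [Finset.sum_add_distrib, ← Finset.mul_sum, ← Finset.mul_sum, marg_one]
      have hD : ∑ y : Fin (n+1) → Bool,
          ((if y a' then (1:ℝ) else 0) * (if y (Fin.last n) then 1 else 0)
            * seqProb u lf T y - u * ((if y a' then (1:ℝ) else 0) * seqProb u lf T y))
          = (∑ y : Fin (n+1) → Bool, (if y a' then (1:ℝ) else 0)
              * (if y (Fin.last n) then 1 else 0) * seqProb u lf T y) - u * u := by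
        rw [Finset.sum_sub_distrib, ← Finset.mul_sum, marg_one]
      rw [hD]
      by_cases hcase : a' = Fin.last n
      · have hDval : ∑ y : Fin (n+1) → Bool, (if y a' then (1:ℝ) else 0)
            * (if y (Fin.last n) then 1 else 0) * seqProb u lf T y = u := by
          rw [hcase]
          have : ∀ y : Fin (n+1) → Bool,
              (if y (Fin.last n) then (1:ℝ) else 0) * (if y (Fin.last n) then 1 else 0)
                * seqProb u lf T y
              = (if y (Fin.last n) then (1:ℝ) else 0) * seqProb u lf T y := by
            intro y; rw [chi_sq]
          rw [Finset.sum_congr rfl (fun y _ => this y), marg_one]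
        rw [hDval]
        have hav : a.val = n := by
          have : a'.val = n := by rw [hcase]; rfl
          simpa [ha'] using this
        have : Finset.Icc (a.val+1) ((Fin.last (n+1)).val) = {n+1} := by
          rw [hav, Fin.val_last]
          exact Finset.Icc_self (n+1)
        rw [this, Finset.prod_singleton]
        ring
      · have hlt : a' < Fin.last n := lt_of_le_of_ne (Fin.le_last a') hcase
        rw [ih T a' (Fin.last n) hlt]
        have hle : a'.val + 1 ≤ n + 1 := by omega
        have : Finset.Icc (a.val+1) ((Fin.last (n+1)).val)
            = Finset.Icc (a'.val+1) (n+1) := by rfl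
        rw [this, Finset.prod_Icc_succ_top hle]
        have : (Fin.last n).val = n := rfl
        rw [this]
        ring

lemma sum_Icc_shift (m N : ℕ) (f : ℕ → ℝ) :
    ∑ q ∈ Finset.Icc m N, f q = ∑ d ∈ Finset.range (N+1-m), f (m+d) := by
  apply Finset.sum_nbij' (fun q => q - m) (fun d => m + d)
  · intro q hq; simp only [Finset.mem_Icc] at hq; simp only [Finset.mem_range]; omega
  · intro d hd; simp only [Finset.mem_range] at hd; simp only [Finset.mem_Icc]; omega
  · intro q hq; simp only [Finset.mem_Icc] at hq; omega
  · intro d hd; simp only [Finset.mem_range] at hd; omega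
  · intro q hq; simp only [Finset.mem_Icc] at hq
    congr 1; omega

lemma symm_split {N : ℕ} (f : Fin N → Fin N → ℝ) (hsymm : ∀ i j, f i j = f j i) :
    ∑ i, ∑ j, f i j
      = (∑ i, f i i)
        + 2 * ∑ i, ∑ j ∈ Finset.filter (fun j => i < j) Finset.univ, f i j := by
  have hrow : ∀ i : Fin N, ∑ j, f i j
      = f i i + (∑ j ∈ Finset.filter (fun j => i < j) Finset.univ, f i j
        + ∑ j ∈ Finset.filter (fun j => j < i) Finset.univ, f i j) := by
    intro i
    rw [← Finset.sum_filter_add_sum_filter_not Finset.univ (fun j => j = i) (f i)]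
    congr 1
    · rw [Finset.filter_eq' Finset.univ i, if_pos (Finset.mem_univ i), Finset.sum_singleton]
    · rw [← Finset.sum_filter_add_sum_filter_not
        (Finset.filter (fun j => ¬ j = i) Finset.univ) (fun j => i < j)]
      congr 1
      · apply Finset.sum_congr _ (fun x _ => rfl)
        rw [Finset.filter_filter]
        apply Finset.filter_congr
        intro j _
        constructor
        · exact fun h => h.2
        · intro h; exact ⟨Fin.ne_of_gt h, h⟩
      · apply Finset.sum_congr _ (fun x _ => rfl)
        rw [Finset.filter_filter]
        apply Finset.filter_congr
        intro j _
        constructor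
        · intro h
          rcases lt_or_ge j i with h' | h'
          · exact h'
          · exact absurd (lt_of_le_of_ne h' (Ne.symm h.1)) h.2
        · intro h; exact ⟨Fin.ne_of_lt h, not_lt_of_gt h⟩
  rw [Finset.sum_congr rfl (fun i _ => hrow i), Finset.sum_add_distrib,
    Finset.sum_add_distrib]
  have hswap : ∑ i, ∑ j ∈ Finset.filter (fun j => j < i) Finset.univ, f i j
      = ∑ i, ∑ j ∈ Finset.filter (fun j => i < j) Finset.univ, f i j := by
    rw [Finset.sum_comm' (t' := Finset.univ)
      (s' := fun j => Finset.filter (fun i => j < i) Finset.univ)]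
    · exact Finset.sum_congr rfl (fun j _ => Finset.sum_congr rfl
        (fun i _ => hsymm i j))
    · intro x y
      simp only [Finset.mem_univ, Finset.mem_filter, true_and, and_true]
  rw [hswap]
  ring

/-- mean squared error of the averaging estimator
`ũ_a(z) = (1/N) ∑ z_n` for `N = n + 1 ≥ 2` samples. -/
theorem avg_estimator_mse (u lf : ℝ) (hu : 0 < u) (hu1 : u < 1) (hlf : 0 < lf)
    (n : ℕ) (hn : 1 ≤ n) (T : ℕ → ℝ) (hT : ∀ k, 1 ≤ k → k ≤ n → 0 < T k) :
    (∑ z : Fin (n + 1) → Bool,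
        ((∑ i, (if z i then (1 : ℝ) else 0)) / ((n : ℝ) + 1)) ^ 2 * seqProb u lf T z) - u ^ 2
      = u * (1 - u) / ((n : ℝ) + 1)
        + 2 * u * (1 - u) / ((n : ℝ) + 1) ^ 2 *
          ∑ i ∈ Finset.Icc 1 n, ∑ j ∈ Finset.Icc 1 (n + 1 - i),
            ∏ k ∈ Finset.Icc j (i + j - 1), Real.exp (-(lf * T k) / u) := by
  classical
  have hNne : ((n:ℝ) + 1) ≠ 0 := by positivity
  set E : ℕ → ℝ := fun k => Real.exp (-(lf * T k) / u) with hE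
  set g : ℕ → ℕ → ℝ := fun p q => ∏ k ∈ Finset.Icc (p+1) q, E k with hg
  -- Step 1: expand the square
  have h1 : ∀ z : Fin (n+1) → Bool,
      ((∑ i, (if z i then (1 : ℝ) else 0)) / ((n : ℝ) + 1)) ^ 2 * seqProb u lf T z
      = (∑ i : Fin (n+1), ∑ j : Fin (n+1),
          (if z i then (1:ℝ) else 0) * (if z j then 1 else 0) * seqProb u lf T z)
        / ((n:ℝ)+1)^2 := by
    intro z
    rw [div_pow, pow_two (∑ i, (if z i then (1 : ℝ) else 0)), Finset.sum_mul_sum,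
      div_mul_eq_mul_div]
    simp only [Finset.sum_mul]
  rw [Finset.sum_congr rfl (fun z _ => h1 z), ← Finset.sum_div]
  -- Step 2: swap sums
  have hswap : (∑ z : Fin (n+1) → Bool, ∑ i : Fin (n+1), ∑ j : Fin (n+1),
        (if z i then (1:ℝ) else 0) * (if z j then 1 else 0) * seqProb u lf T z)
      = ∑ i : Fin (n+1), ∑ j : Fin (n+1), ∑ z : Fin (n+1) → Bool,
        (if z i then (1:ℝ) else 0) * (if z j then 1 else 0) * seqProb u lf T z := by
    rw [Finset.sum_comm]
    exact Finset.sum_congr rfl (fun i _ => Finset.sum_comm)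
  rw [hswap]
  -- Step 3: evaluate the inner sums
  have hG : ∀ i j : Fin (n+1),
      (∑ z : Fin (n+1) → Bool,
        (if z i then (1:ℝ) else 0) * (if z j then 1 else 0) * seqProb u lf T z)
      = u^2 + u*(1-u) * g (min i.val j.val) (max i.val j.val) := by
    intro i j
    rcases lt_trichotomy i j with h | h | h
    · rw [marg_two u lf n T i j h, hg]
      have hv := Fin.lt_iff_val_lt_val.mp h
      rw [min_eq_left (Nat.le_of_lt hv), max_eq_right (Nat.le_of_lt hv)]
    · subst h
      have : ∀ z : Fin (n+1) → Bool,
          (if z i then (1:ℝ) else 0) * (if z i then (1:ℝ) else 0) * seqProb u lf T z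
          = (if z i then (1:ℝ) else 0) * seqProb u lf T z := by
        intro z; rw [chi_sq]
      rw [Finset.sum_congr rfl (fun z _ => this z), marg_one, hg]
      simp only [min_self, max_self]
      rw [Finset.Icc_eq_empty (by omega : ¬ i.val + 1 ≤ i.val), Finset.prod_empty]
      ring
    · have : ∀ z : Fin (n+1) → Bool,
          (if z i then (1:ℝ) else 0) * (if z j then (1:ℝ) else 0) * seqProb u lf T z
          = (if z j then (1:ℝ) else 0) * (if z i then (1:ℝ) else 0) * seqProb u lf T z := by
        intro z; ring
      rw [Finset.sum_congr rfl (fun z _ => this z), marg_two u lf n T j i h, hg]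
      have hv := Fin.lt_iff_val_lt_val.mp h
      rw [min_eq_right (Nat.le_of_lt hv), max_eq_left (Nat.le_of_lt hv)]
  rw [Finset.sum_congr rfl (fun i _ => Finset.sum_congr rfl (fun j _ => hG i j))]
  -- Step 4: separate the constant part
  have hsplit1 : (∑ i : Fin (n+1), ∑ j : Fin (n+1),
        (u^2 + u*(1-u) * g (min i.val j.val) (max i.val j.val)))
      = ((n:ℝ)+1)^2 * u^2
        + u*(1-u) * ∑ i : Fin (n+1), ∑ j : Fin (n+1),
            g (min i.val j.val) (max i.val j.val) := by
    simp only [Finset.sum_add_distrib, Finset.sum_const, Finset.card_univ,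
      Fintype.card_fin, nsmul_eq_mul, Nat.cast_add, Nat.cast_one, ← Finset.mul_sum]
    ring
  rw [hsplit1]
  -- Step 5: symmetric split
  have hsymm : ∀ i j : Fin (n+1),
      g (min i.val j.val) (max i.val j.val) = g (min j.val i.val) (max j.val i.val) := by
    intro i j; rw [min_comm, max_comm]
  rw [symm_split _ hsymm]
  have hdiag : (∑ i : Fin (n+1), g (min i.val i.val) (max i.val i.val)) = (n:ℝ)+1 := by
    have : ∀ i : Fin (n+1), g (min i.val i.val) (max i.val i.val) = 1 := by
      intro i
      simp only [min_self, max_self, hg]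
      rw [Finset.Icc_eq_empty (by omega : ¬ i.val + 1 ≤ i.val), Finset.prod_empty]
    rw [Finset.sum_congr rfl (fun i _ => this i)]
    simp
  rw [hdiag]
  -- Step 6: the off-diagonal sum equals the target triangle sum
  have hoff : (∑ i : Fin (n+1), ∑ j ∈ Finset.filter (fun j => i < j) Finset.univ,
        g (min i.val j.val) (max i.val j.val))
      = ∑ i ∈ Finset.Icc 1 n, ∑ j ∈ Finset.Icc 1 (n + 1 - i),
          ∏ k ∈ Finset.Icc j (i + j - 1), E k := by
    -- inner reindex to ℕ
    have hinner : ∀ i : Fin (n+1),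
        (∑ j ∈ Finset.filter (fun j => i < j) Finset.univ,
          g (min i.val j.val) (max i.val j.val))
        = ∑ q ∈ Finset.Icc (i.val+1) n, g i.val q := by
      intro i
      refine Finset.sum_bij' (fun j _ => j.val)
        (fun q hq => (⟨q, by simp only [Finset.mem_Icc] at hq; omega⟩ : Fin (n+1)))
        ?_ ?_ ?_ ?_ ?_
      · intro j hj
        simp only [Finset.mem_filter, Finset.mem_univ, true_and] at hj
        simp only [Finset.mem_Icc]
        exact ⟨Fin.lt_iff_val_lt_val.mp hj, by omega⟩
      · intro q hq
        simp only [Finset.mem_filter, Finset.mem_univ, true_and]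
        simp only [Finset.mem_Icc] at hq
        have hq2 : i.val < q := by omega
        exact Fin.lt_iff_val_lt_val.mpr hq2
      · intro j hj
        exact Fin.ext rfl
      · intro q hq
        rfl
      · intro j hj
        simp only [Finset.mem_filter, Finset.mem_univ, true_and] at hj
        have hv := Fin.lt_iff_val_lt_val.mp hj
        rw [min_eq_left (Nat.le_of_lt hv), max_eq_right (Nat.le_of_lt hv)]
    rw [Finset.sum_congr rfl (fun i _ => hinner i)]
    -- outer to range
    rw [Fin.sum_univ_eq_sum_range (fun p => ∑ q ∈ Finset.Icc (p+1) n, g p q) (n+1)]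
    -- reindex inner Icc to range
    have hA : ∀ p, (∑ q ∈ Finset.Icc (p+1) n, g p q)
        = ∑ d ∈ Finset.range (n - p), g p (p+1+d) := by
      intro p
      rw [sum_Icc_shift (p+1) n (g p)]
      have : n + 1 - (p+1) = n - p := by omega
      rw [this]
    rw [Finset.sum_congr rfl (fun p _ => hA p)]
    -- drop the empty last term
    rw [Finset.sum_range_succ]
    have : (∑ d ∈ Finset.range (n - n), g n (n+1+d)) = 0 := by
      simp
    rw [this, add_zero]
    -- swap the ℕ double sum
    rw [Finset.sum_comm' (t' := Finset.range n)
      (s' := fun d => Finset.range (n - d))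
      (by intro x y; simp only [Finset.mem_range]; omega)]
    -- match with the RHS
    rw [sum_Icc_shift 1 n (fun i => ∑ j ∈ Finset.Icc 1 (n + 1 - i),
      ∏ k ∈ Finset.Icc j (i + j - 1), E k)]
    have hr : n + 1 - 1 = n := by omega
    rw [hr]
    apply Finset.sum_congr rfl
    intro e he
    simp only [Finset.mem_range] at he
    rw [sum_Icc_shift 1 (n + 1 - (1 + e)) (fun j =>
      ∏ k ∈ Finset.Icc j (1 + e + j - 1), E k)]
    have hr2 : n + 1 - (1 + e) + 1 - 1 = n - e := by omega
    rw [hr2]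
    apply Finset.sum_congr rfl
    intro d hd
    simp only [Finset.mem_range] at hd
    rw [hg]
    apply Finset.prod_congr _ (fun k _ => rfl)
    congr 1 <;> omega
  rw [hoff]
  -- Step 7: final arithmetic
  field_simp
  ring
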